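/- For every ε > 0, for all sufficiently large n there exists a configuration of n points in a triangle of unit area such that the number of triples forming triangles of area at most 1/4 is at most (5/8 + ε)·C(n,3). -/

import Mathlib

open MeasureTheory

local notation "E" => EuclideanSpace ℝ (Fin 2)

noncomputable def triArea (p q r : EuclideanSpace ℝ (Fin 2)) : ℝ :=
  (volume (convexHull ℝ ({p, q, r} : Set (EuclideanSpace ℝ (Fin 2))))).toReal


lemma vol_tri_prod : volume {q : ℝ × ℝ | 0 ≤ q.1 ∧ 0 ≤ q.2 ∧ q.1 + q.2 ≤ 1} = ENNReal.ofReal (1/2) := by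
  have hmeas : MeasurableSet {q : ℝ × ℝ | 0 ≤ q.1 ∧ 0 ≤ q.2 ∧ q.1 + q.2 ≤ 1} := by
    apply MeasurableSet.inter
    · exact measurableSet_le measurable_const measurable_fst
    apply MeasurableSet.inter
    · exact measurableSet_le measurable_const measurable_snd
    · exact measurableSet_le (measurable_fst.add measurable_snd) measurable_const
  rw [Measure.volume_eq_prod, Measure.prod_apply hmeas]
  have hslice : ∀ x : ℝ, (Prod.mk x ⁻¹' {q : ℝ × ℝ | 0 ≤ q.1 ∧ 0 ≤ q.2 ∧ q.1 + q.2 ≤ 1})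
      = if 0 ≤ x then Set.Icc 0 (1 - x) else ∅ := by
    intro x
    split_ifs with hx
    · ext y; simp [Set.mem_Icc, hx]; intro _; constructor <;> intro h <;> linarith
    · ext y; simp [hx]
  simp_rw [hslice]
  have : ∀ x : ℝ, volume (if 0 ≤ x then Set.Icc 0 (1 - x) else ∅)
      = Set.indicator (Set.Ici 0) (fun x => ENNReal.ofReal (1 - x)) x := by
    intro x
    split_ifs with hx
    · rw [Real.volume_Icc, Set.indicator_of_mem (Set.mem_Ici.2 hx)]; norm_num
    · rw [Set.indicator_of_notMem (by simpa using hx)]; simp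
  simp_rw [this]
  rw [lintegral_indicator measurableSet_Ici _]
  have hsplit : Set.Ici (0:ℝ) = Set.Icc 0 1 ∪ Set.Ioi 1 := by
    ext x
    simp only [Set.mem_Ici, Set.mem_union, Set.mem_Icc, Set.mem_Ioi]
    constructor
    · intro h; rcases le_or_gt x 1 with h1 | h1
      · exact Or.inl ⟨h, h1⟩
      · exact Or.inr h1
    · rintro (⟨h, _⟩ | h) <;> linarith
  rw [hsplit, lintegral_union measurableSet_Ioi (by
    rw [Set.disjoint_left]; rintro a ⟨_, h1⟩ h2; simp at h2; linarith)]
  have h2 : ∫⁻ x in Set.Ioi (1:ℝ), ENNReal.ofReal (1 - x) = 0 := by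
    rw [setLIntegral_congr_fun measurableSet_Ioi
      (fun x hx => by
        rw [ENNReal.ofReal_eq_zero.2 (by simp at hx; linarith)])]
    simp
  rw [h2, add_zero]
  rw [← MeasureTheory.ofReal_integral_eq_lintegral_ofReal]
  · congr 1
    rw [MeasureTheory.integral_Icc_eq_integral_Ioc, ← intervalIntegral.integral_of_le zero_le_one]
    rw [intervalIntegral.integral_sub (continuous_const.intervalIntegrable _ _) (intervalIntegral.intervalIntegrable_id)]
    norm_num
  · exact (continuous_const.sub continuous_id).integrableOn_Icc
  · filter_upwards [ae_restrict_mem measurableSet_Icc] with x hx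
    simp at hx ⊢; linarith [hx.2]

lemma vol_std_corner : volume {x : E | 0 ≤ x 0 ∧ 0 ≤ x 1 ∧ x 0 + x 1 ≤ 1} = ENNReal.ofReal (1/2) := by
  have hmeas : MeasurableSet {q : ℝ × ℝ | 0 ≤ q.1 ∧ 0 ≤ q.2 ∧ q.1 + q.2 ≤ 1} := by
    apply MeasurableSet.inter
    · exact measurableSet_le measurable_const measurable_fst
    apply MeasurableSet.inter
    · exact measurableSet_le measurable_const measurable_snd
    · exact measurableSet_le (measurable_fst.add measurable_snd) measurable_const
  have h1 := ((volume_preserving_finTwoArrow ℝ).comp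
    (EuclideanSpace.volume_preserving_symm_measurableEquiv_toLp (Fin 2))).measure_preimage
    hmeas.nullMeasurableSet
  have h2 : (MeasurableEquiv.finTwoArrow ∘ (MeasurableEquiv.toLp 2 (Fin 2 → ℝ)).symm) ⁻¹'
      {q : ℝ × ℝ | 0 ≤ q.1 ∧ 0 ≤ q.2 ∧ q.1 + q.2 ≤ 1}
      = {x : E | 0 ≤ x 0 ∧ 0 ≤ x 1 ∧ x 0 + x 1 ≤ 1} := rfl
  rw [h2] at h1
  rw [h1, vol_tri_prod]

lemma hull_eq_corner :
    convexHull ℝ ({(0 : E), !₂[1, 0], !₂[0, 1]} : Set E)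
      = {x : E | 0 ≤ x 0 ∧ 0 ≤ x 1 ∧ x 0 + x 1 ≤ 1} := by
  apply le_antisymm
  · apply convexHull_min
    · rintro x (rfl | rfl | rfl) <;> norm_num [Set.mem_setOf_eq]
    · rintro x ⟨hx0, hx1, hx2⟩ y ⟨hy0, hy1, hy2⟩ a b ha hb hab
      refine ⟨?_, ?_, ?_⟩ <;>
        simp only [PiLp.add_apply, PiLp.smul_apply, smul_eq_mul] <;> nlinarith
  · rintro x ⟨hx0, hx1, hx2⟩
    have := Finset.centerMass_mem_convexHull (Finset.univ : Finset (Fin 3))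
      (w := ![1 - x 0 - x 1, x 0, x 1]) (z := ![(0 : E), !₂[1, 0], !₂[0, 1]])
      (by intro i _; fin_cases i <;> simp <;> linarith)
      (by simp [Fin.sum_univ_three]; linarith)
      (by intro i _; fin_cases i <;> simp)
      (s := ({(0 : E), !₂[1, 0], !₂[0, 1]} : Set E))
    convert this using 1
    rw [Finset.centerMass]
    simp [Fin.sum_univ_three]
    ext i
    fin_cases i <;> simp [PiLp.add_apply, PiLp.smul_apply] <;>
      rw [show (1 - x 0 - x 1 + x 0 + x 1) = 1 by ring] <;> simp

lemma vol_corner : volume (convexHull ℝ ({(0 : E), !₂[1, 0], !₂[0, 1]} : Set E))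
    = ENNReal.ofReal (1/2) := by
  rw [hull_eq_corner]; exact vol_std_corner


noncomputable def shear (p q r : E) : E →ₗ[ℝ] E where
  toFun x := x 0 • (q - p) + x 1 • (r - p)
  map_add' x y := by
    simp only [PiLp.add_apply, add_smul]; abel
  map_smul' c x := by
    simp only [PiLp.smul_apply, RingHom.id_apply, smul_eq_mul, mul_smul, smul_add]

lemma shear_det (p q r : E) : LinearMap.det (shear p q r)
    = (q 0 - p 0) * (r 1 - p 1) - (q 1 - p 1) * (r 0 - p 0) := by
  rw [← LinearMap.det_toMatrix (PiLp.basisFun 2 ℝ (Fin 2)), Matrix.det_fin_two]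
  simp [LinearMap.toMatrix_apply, shear, PiLp.basisFun_apply, PiLp.basisFun_repr,
    PiLp.add_apply, PiLp.smul_apply, PiLp.sub_apply,
    Pi.single_apply]
  ring

lemma triArea_eq (p q r : E) :
    triArea p q r = |(q 0 - p 0) * (r 1 - p 1) - (q 1 - p 1) * (r 0 - p 0)| / 2 := by
  have hf0 : shear p q r !₂[1, 0] = q - p := by
    show (1:ℝ) • (q - p) + (0:ℝ) • (r - p) = q - p
    simp
  have hf1 : shear p q r !₂[0, 1] = r - p := by
    show (0:ℝ) • (q - p) + (1:ℝ) • (r - p) = r - p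
    simp
  have himg : ({p, q, r} : Set E) = (fun x => p + shear p q r x) '' {0, !₂[1, 0], !₂[0, 1]} := by
    rw [Set.image_insert_eq, Set.image_insert_eq, Set.image_singleton]
    simp [hf0, hf1]
  have hconv : convexHull ℝ ({p, q, r} : Set E)
      = (fun x => p + shear p q r x) '' convexHull ℝ ({0, !₂[1, 0], !₂[0, 1]} : Set E) := by
    rw [himg]
    exact (((AffineEquiv.constVAdd ℝ E p).toAffineMap.comp
      (shear p q r).toAffineMap).image_convexHull _).symm
  have hvol : volume (convexHull ℝ ({p, q, r} : Set E))
      = ENNReal.ofReal (|(q 0 - p 0) * (r 1 - p 1) - (q 1 - p 1) * (r 0 - p 0)| / 2) := by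
    have hcomp : (fun x => p + shear p q r x) '' convexHull ℝ ({0, !₂[1, 0], !₂[0, 1]} : Set E)
        = (p + ·) '' (shear p q r '' convexHull ℝ ({0, !₂[1, 0], !₂[0, 1]} : Set E)) := by
      rw [← Set.image_comp]; rfl
    rw [hconv, hcomp, Set.image_add_left, measure_preimage_add,
      Measure.addHaar_image_linearMap, shear_det, vol_corner,
      ← ENNReal.ofReal_mul (abs_nonneg _), mul_one_div]
  rw [triArea, hvol, ENNReal.toReal_ofReal (by positivity)]

noncomputable def loc : Fin 4 → E := ![!₂[0, 0], !₂[2, 0], !₂[0, 1], !₂[2/3, 1/3]]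

lemma loc_area : ∀ j k l : Fin 4, j ≠ k → j ≠ l → k ≠ l →
    1/4 < triArea (loc j) (loc k) (loc l) := by
  intro j k l hjk hjl hkl
  fin_cases j <;> fin_cases k <;> fin_cases l <;> simp_all <;>
    rw [triArea_eq] <;> norm_num [loc, Matrix.cons_val_two, Matrix.cons_val_three] <;>
    rw [abs_of_pos (by norm_num : (0:ℝ) < 2/3)] <;> norm_num

lemma loc_mem : ∀ j : Fin 4, loc j ∈ convexHull ℝ ({!₂[0,0], !₂[2,0], !₂[0,1]} : Set E) := by
  intro j
  fin_cases j
  · exact subset_convexHull ℝ _ (Set.mem_insert _ _)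
  · exact subset_convexHull ℝ _ (Set.mem_insert_iff.2 (Or.inr (Set.mem_insert _ _)))
  · exact subset_convexHull ℝ _
      (Set.mem_insert_iff.2 (Or.inr (Set.mem_insert_iff.2 (Or.inr rfl))))
  · have h := Finset.centerMass_mem_convexHull (Finset.univ : Finset (Fin 3))
      (w := ![(1:ℝ)/3, 1/3, 1/3]) (z := ![!₂[0,0], !₂[2,0], !₂[0,1]])
      (by intro i _; fin_cases i <;> norm_num)
      (by simp [Fin.sum_univ_three]; norm_num)
      (by intro i _; fin_cases i <;> simp)
      (s := ({!₂[0,0], !₂[2,0], !₂[0,1]} : Set E))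
    convert h using 1
    rw [Finset.centerMass]
    simp [Fin.sum_univ_three, loc]
    ext i; fin_cases i <;> simp [PiLp.add_apply, PiLp.smul_apply] <;> norm_num



def embN (n m : ℕ) (h4 : 4 * m ≤ n) (j : ℕ) (hj : j < 4) (a : Fin m) : Fin n :=
  ⟨j * m + a.val, by
    have h1 : j * m + m ≤ 4 * m := by
      rw [← Nat.succ_mul]; exact Nat.mul_le_mul_right _ hj
    exact lt_of_lt_of_le (Nat.add_lt_add_left a.isLt _) (le_trans h1 h4)⟩

def fcl (n m : ℕ) (i : Fin n) : Fin 4 := ⟨min 3 (i.val / m), by omega⟩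

lemma fcl_embN {n m : ℕ} (hm0 : 0 < m) (h4 : 4 * m ≤ n) {j : ℕ} (hj : j < 4) (a : Fin m) :
    (fcl n m (embN n m h4 j hj a)).val = j := by
  show min 3 ((j * m + a.val) / m) = j
  rw [Nat.mul_comm j m, Nat.mul_add_div hm0, Nat.div_eq_of_lt a.isLt]
  omega

lemma embN_lt {n m : ℕ} (h4 : 4 * m ≤ n) {j j' : ℕ} (hj : j < 4) (hj' : j' < 4)
    (hjj : j < j') (a a' : Fin m) : embN n m h4 j hj a < embN n m h4 j' hj' a' := by
  show j * m + a.val < j' * m + a'.val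
  have h1 : j * m + m ≤ j' * m := by
    rw [← Nat.succ_mul]; exact Nat.mul_le_mul_right _ hjj
  exact lt_of_lt_of_le (Nat.add_lt_add_left a.isLt _) (le_trans h1 (Nat.le_add_right _ _))

lemma embN_inj {n m : ℕ} (h4 : 4 * m ≤ n) {j j' : ℕ} (hj : j < 4) (hj' : j' < 4)
    {a a' : Fin m} (h : embN n m h4 j hj a = embN n m h4 j' hj' a') : j = j' ∧ a = a' := by
  have hv : j * m + a.val = j' * m + a'.val := congrArg Fin.val h
  have hjeq : j = j' := by
    by_contra hne
    rcases Nat.lt_or_ge j j' with hlt | hge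
    · exact absurd hv (Nat.ne_of_lt (embN_lt h4 hj hj' hlt a a'))
    · exact absurd hv.symm (Nat.ne_of_lt (embN_lt h4 hj' hj (by omega) a' a))
  subst hjeq
  exact ⟨rfl, Fin.ext (Nat.add_left_cancel hv)⟩

def pt3 : Fin 4 → ℕ × ℕ × ℕ := ![(1,2,3),(0,2,3),(0,1,3),(0,1,2)]

lemma pt3_lt4 : ∀ q : Fin 4, (pt3 q).1 < 4 ∧ (pt3 q).2.1 < 4 ∧ (pt3 q).2.2 < 4 := by decide

lemma pt3_mono : ∀ q : Fin 4, (pt3 q).1 < (pt3 q).2.1 ∧ (pt3 q).2.1 < (pt3 q).2.2 := by decide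

lemma pt3_inj : ∀ q q' : Fin 4, pt3 q = pt3 q' → q = q' := by decide

theorem stmt_15 (ε : ℝ) (hε : 0 < ε) :
    ∃ N : ℕ, ∀ n ≥ N,
      ∃ (A B C : EuclideanSpace ℝ (Fin 2)) (p : Fin n → EuclideanSpace ℝ (Fin 2)),
        triArea A B C = 1 ∧
        (∀ i, p i ∈ convexHull ℝ ({A, B, C} : Set (EuclideanSpace ℝ (Fin 2)))) ∧
        ({t : Fin n × Fin n × Fin n | t.1 < t.2.1 ∧ t.2.1 < t.2.2 ∧
            triArea (p t.1) (p t.2.1) (p t.2.2) ≤ 1 / 4}.ncard : ℝ) ≤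
          (5 / 8 + ε) * (n.choose 3) := by
  refine ⟨⌈27 / (8 * ε)⌉₊ + 4, fun n hn => ?_⟩
  set m := n / 4 with hm
  have h4 : 4 * m ≤ n := by omega
  have hm0 : 0 < m := by omega
  refine ⟨!₂[0,0], !₂[2,0], !₂[0,1], fun i => loc (fcl n m i), ?_, fun i => loc_mem _, ?_⟩
  · rw [triArea_eq]; norm_num
  set T3 := {t : Fin n × Fin n × Fin n | t.1 < t.2.1 ∧ t.2.1 < t.2.2} with hT3
  set Bad := {t : Fin n × Fin n × Fin n | t.1 < t.2.1 ∧ t.2.1 < t.2.2 ∧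
      triArea (loc (fcl n m t.1)) (loc (fcl n m t.2.1)) (loc (fcl n m t.2.2)) ≤ 1/4} with hBad
  show (Bad.ncard : ℝ) ≤ (5 / 8 + ε) * (n.choose 3)
  have hBadT3 : Bad ⊆ T3 := fun t ht => ⟨ht.1, ht.2.1⟩
  set Good := T3 \ Bad with hGood
  -- cardinality identities
  have hsplit : Bad.ncard + Good.ncard = T3.ncard := by
    have h1 : T3 \ Good = Bad := by
      rw [hGood, Set.diff_diff_right_self, Set.inter_eq_self_of_subset_right hBadT3]
    calc Bad.ncard + Good.ncard = (T3 \ Good).ncard + Good.ncard := by rw [h1]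
      _ = T3.ncard := Set.ncard_diff_add_ncard_of_subset Set.diff_subset (Set.toFinite _)
  -- upper bound on T3
  have hT3le : T3.ncard ≤ n.choose 3 := by
    have hle := Set.ncard_le_ncard_of_injOn
      (fun t : Fin n × Fin n × Fin n => ({t.1, t.2.1, t.2.2} : Finset (Fin n)))
      (s := T3) (t := {s : Finset (Fin n) | s.card = 3})
      (by
        rintro ⟨a, b, c⟩ ⟨h1, h2⟩
        rw [Set.mem_setOf_eq, Finset.card_eq_three]
        exact ⟨a, b, c, ne_of_lt h1, ne_of_lt (h1.trans h2), ne_of_lt h2, rfl⟩)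
      (by
        rintro ⟨a, b, c⟩ ⟨h1, h2⟩ ⟨a', b', c'⟩ ⟨h1', h2'⟩ hval
        simp only at hval
        have ha : a ∈ ({a', b', c'} : Finset (Fin n)) := hval ▸ Finset.mem_insert_self _ _
        have hb : b ∈ ({a', b', c'} : Finset (Fin n)) := hval ▸ (by simp)
        have hc : c ∈ ({a', b', c'} : Finset (Fin n)) := hval ▸ (by simp)
        have ha' : a' ∈ ({a, b, c} : Finset (Fin n)) := hval ▸ Finset.mem_insert_self _ _
        have hb' : b' ∈ ({a, b, c} : Finset (Fin n)) := hval.symm ▸ (by simp)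
        have hc' : c' ∈ ({a, b, c} : Finset (Fin n)) := hval.symm ▸ (by simp)
        simp only [Finset.mem_insert, Finset.mem_singleton, Fin.ext_iff] at ha hb hc ha' hb' hc'
        simp only [Fin.lt_def] at h1 h2 h1' h2'
        simp only [Prod.mk.injEq, Fin.ext_iff]
        omega)
      (Set.toFinite _)
    have hS3 : ({s : Finset (Fin n) | s.card = 3}).ncard = n.choose 3 := by
      rw [Set.ncard_eq_toFinset_card']
      have he : ({s : Finset (Fin n) | s.card = 3}).toFinset = Finset.univ.powersetCard 3 := by
        ext s; simp [Finset.mem_powersetCard_univ]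
      rw [he, Finset.card_powersetCard, Finset.card_univ, Fintype.card_fin]
    exact hS3 ▸ hle
  -- lower bound on Good
  have hGoodge : 4 * m ^ 3 ≤ Good.ncard := by
    rw [Set.ncard_eq_toFinset_card']
    have hle := Finset.card_le_card_of_injOn
      (f := fun x : Fin 4 × Fin m × Fin m × Fin m =>
        (embN n m h4 (pt3 x.1).1 (pt3_lt4 x.1).1 x.2.1,
         embN n m h4 (pt3 x.1).2.1 (pt3_lt4 x.1).2.1 x.2.2.1,
         embN n m h4 (pt3 x.1).2.2 (pt3_lt4 x.1).2.2 x.2.2.2))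
      (s := Finset.univ) (t := Good.toFinset)
      (by
        rintro ⟨q, a, b, c⟩ -
        rw [Finset.mem_coe, Set.mem_toFinset, hGood]
        have hmono := pt3_mono q
        have hlt1 := embN_lt h4 (pt3_lt4 q).1 (pt3_lt4 q).2.1 hmono.1 a b
        have hlt2 := embN_lt h4 (pt3_lt4 q).2.1 (pt3_lt4 q).2.2 hmono.2 b c
        refine ⟨⟨hlt1, hlt2⟩, fun hbad => ?_⟩
        have harea := hbad.2.2
        have e1 : fcl n m (embN n m h4 (pt3 q).1 (pt3_lt4 q).1 a)
            = ⟨(pt3 q).1, (pt3_lt4 q).1⟩ := Fin.ext (fcl_embN hm0 h4 _ a)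
        have e2 : fcl n m (embN n m h4 (pt3 q).2.1 (pt3_lt4 q).2.1 b)
            = ⟨(pt3 q).2.1, (pt3_lt4 q).2.1⟩ := Fin.ext (fcl_embN hm0 h4 _ b)
        have e3 : fcl n m (embN n m h4 (pt3 q).2.2 (pt3_lt4 q).2.2 c)
            = ⟨(pt3 q).2.2, (pt3_lt4 q).2.2⟩ := Fin.ext (fcl_embN hm0 h4 _ c)
        rw [e1, e2, e3] at harea
        have hgt := loc_area ⟨(pt3 q).1, (pt3_lt4 q).1⟩ ⟨(pt3 q).2.1, (pt3_lt4 q).2.1⟩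
          ⟨(pt3 q).2.2, (pt3_lt4 q).2.2⟩
          (Fin.ne_of_val_ne (Nat.ne_of_lt hmono.1))
          (Fin.ne_of_val_ne (Nat.ne_of_lt (hmono.1.trans hmono.2)))
          (Fin.ne_of_val_ne (Nat.ne_of_lt hmono.2))
        linarith)
      (by
        rintro ⟨q, a, b, c⟩ - ⟨q', a', b', c'⟩ - hxx
        simp only [Prod.mk.injEq] at hxx
        obtain ⟨hx1, hx2, hx3⟩ := hxx
        obtain ⟨e1, ea⟩ := embN_inj h4 _ _ hx1
        obtain ⟨e2, eb⟩ := embN_inj h4 _ _ hx2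
        obtain ⟨e3, ec⟩ := embN_inj h4 _ _ hx3
        have hq : q = q' := pt3_inj q q' (by
          have := pt3 q'
          exact Prod.ext e1 (Prod.ext e2 e3))
        subst hq; subst ea; subst eb; subst ec; rfl)
    calc 4 * m ^ 3 = (Finset.univ : Finset (Fin 4 × Fin m × Fin m × Fin m)).card := by
          simp [Finset.card_univ]; ring
      _ ≤ _ := hle
  -- final arithmetic
  have hgood_le : Good.ncard ≤ T3.ncard := Set.ncard_le_ncard Set.diff_subset (Set.toFinite _)
  have hbadR : (Bad.ncard : ℝ) = (T3.ncard : ℝ) - Good.ncard := by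
    rw [← hsplit]
    push_cast
    ring
  have hCle : ((n.choose 3 : ℕ) : ℝ) ≤ (n : ℝ) ^ 3 / 6 := by
    have h := Nat.choose_le_pow_div 3 n (α := ℝ)
    norm_num [Nat.factorial] at h
    exact h
  have hmge : ((n : ℝ) - 3) / 4 ≤ (m : ℝ) := by
    have h43 : n ≤ 4 * m + 3 := by omega
    have : (n : ℝ) ≤ 4 * m + 3 := by exact_mod_cast h43
    linarith
  have hn27 : 27 / (8 * ε) ≤ (n : ℝ) := by
    have h1 : (27 / (8 * ε)) ≤ (⌈27 / (8 * ε)⌉₊ : ℝ) := Nat.le_ceil _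
    have h2 : (⌈27 / (8 * ε)⌉₊ : ℝ) ≤ (n : ℝ) := by
      exact_mod_cast le_trans (Nat.le_add_right _ 4) hn
    linarith
  have hn4 : (4 : ℝ) ≤ (n : ℝ) := by
    have : 4 ≤ n := by omega
    exact_mod_cast this
  have hkey : (3 / 8 - ε) * ((n.choose 3 : ℕ) : ℝ) ≤ 4 * (m : ℝ) ^ 3 := by
    rcases le_or_gt (3 / 8 : ℝ) ε with hcase | hcase
    · have h0 : (0 : ℝ) ≤ ((n.choose 3 : ℕ) : ℝ) := Nat.cast_nonneg _
      have h1 : (0 : ℝ) ≤ (m : ℝ) ^ 3 := by positivity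
      nlinarith
    · have hcoef : (0 : ℝ) ≤ 3 / 8 - ε := by linarith
      have step1 : (3 / 8 - ε) * ((n.choose 3 : ℕ) : ℝ) ≤ (3 / 8 - ε) * ((n : ℝ) ^ 3 / 6) :=
        mul_le_mul_of_nonneg_left hCle hcoef
      have hm0R : (0 : ℝ) ≤ ((n : ℝ) - 3) / 4 := by linarith
      have step2 : (((n : ℝ) - 3) / 4) ^ 3 ≤ (m : ℝ) ^ 3 := by
        exact pow_le_pow_left₀ hm0R hmge 3
      have h27 : 27 ≤ 8 * ε * (n : ℝ) := by
        rw [div_le_iff₀ (by positivity)] at hn27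
        linarith [hn27]
      have step3 : (3 / 8 - ε) * ((n : ℝ) ^ 3 / 6) ≤ 4 * (((n : ℝ) - 3) / 4) ^ 3 := by
        nlinarith [mul_nonneg (by linarith : (0:ℝ) ≤ 8 * ε * (n:ℝ) - 27) (sq_nonneg ((n:ℝ))),
          sq_nonneg ((n:ℝ)), hn4]
      nlinarith [step1, step2, step3]
  rw [hbadR]
  have hT3R : (T3.ncard : ℝ) ≤ ((n.choose 3 : ℕ) : ℝ) := by exact_mod_cast hT3le
  have hGoodR : 4 * (m : ℝ) ^ 3 ≤ (Good.ncard : ℝ) := by exact_mod_cast hGoodge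
  linarith
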